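/- Let F be a field, m a positive integer, and for each j ∈ {1,…,m} let A₁⁽ʲ⁾ : r₁×c₁, A₂⁽ʲ⁾ : r₂×c₂, A₃⁽ʲ⁾ : r₃×c₃ and B₁⁽ʲ⁾ : r_B×c₁, B₂⁽ʲ⁾ : r_B×c₂, B₃⁽ʲ⁾ : r_B×c₃ be matrices over F. Assume that the r₂×(m·c₂) matrix [A₂⁽¹⁾ A₂⁽²⁾ ⋯ A₂⁽ᵐ⁾] obtained by horizontal concatenation is of full column rank. Then the ((r₁+r₂+r₃)+r_B)×(m·(c₁+c₂+c₃)) matrix whose j-th column block is the block matrix with top part diag{A₁⁽ʲ⁾, A₂⁽ʲ⁾, A₃⁽ʲ⁾} and bottom row block [B₁⁽ʲ⁾ B₂⁽ʲ⁾ B₃⁽ʲ⁾] is of full column rank, if and only if the ((r₁+r₃)+r_B)×(m·(c₁+c₃)) matrix whose j-th column block has top part diag{A₁⁽ʲ⁾, A₃⁽ʲ⁾} and bottom row block [B₁⁽ʲ⁾ B₃⁽ʲ⁾] is of full column rank. -/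

import Mathlib

/-- The horizontal concatenation of a finite family of matrices sharing the same
row index type: the `j`-th column block is `M j`. -/
def hconcat {F : Type*} {m : ℕ} {R C : Type*} (M : Fin m → Matrix R C F) :
    Matrix R (Fin m × C) F :=
  Matrix.of fun i p => M p.1 i p.2

open Matrix


lemma inj_submatrix {F R C R' C' : Type*} [Field F] [Fintype C] [Fintype C']
    (e : R' ≃ R) (f : C' ≃ C) (M : Matrix R C F) :
    Function.Injective ((M.submatrix e f).mulVecLin) ↔ Function.Injective M.mulVecLin := by
  simp only [Function.Injective, mulVecLin_apply]
  constructor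
  · intro h x y hxy
    have h1 : M.submatrix e f *ᵥ (x ∘ f) = M.submatrix e f *ᵥ (y ∘ f) := by
      rw [submatrix_mulVec_equiv, submatrix_mulVec_equiv]
      have : (x ∘ f) ∘ f.symm = x := by funext c; simp
      have h2 : (y ∘ f) ∘ f.symm = y := by funext c; simp
      rw [this, h2, hxy]
    have := h h1
    funext c
    have := congrFun this (f.symm c)
    simpa using this
  · intro h x y hxy
    rw [submatrix_mulVec_equiv, submatrix_mulVec_equiv] at hxy
    have : M *ᵥ (x ∘ f.symm) = M *ᵥ (y ∘ f.symm) := by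
      funext i
      have := congrFun hxy (e.symm i)
      simpa using this
    have := h this
    funext c
    have := congrFun this (f c)
    simpa using this

lemma inj_fromBlocks {F ρ₁ ρ₂ γ₁ γ₂ : Type*} [Field F] [Fintype γ₁] [Fintype γ₂]
    (P : Matrix ρ₁ γ₁ F) (X : Matrix ρ₁ γ₂ F) (Q : Matrix ρ₂ γ₂ F)
    (hQ : Function.Injective Q.mulVecLin) :
    Function.Injective (fromBlocks P X 0 Q).mulVecLin ↔ Function.Injective P.mulVecLin := by
  rw [injective_iff_map_eq_zero, injective_iff_map_eq_zero] at *
  simp only [mulVecLin_apply] at *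
  constructor
  · intro h v hv
    have := h (Sum.elim v 0) ?_
    · funext c; have := congrFun this (Sum.inl c); simpa using this
    · rw [fromBlocks_mulVec]
      funext i
      rcases i with i | i <;> simp [hv]
  · intro hP v hv
    have hv' : fromBlocks P X 0 Q *ᵥ Sum.elim (v ∘ Sum.inl) (v ∘ Sum.inr) = 0 := by
      rw [Sum.elim_comp_inl_inr]; exact hv
    rw [fromBlocks_mulVec] at hv'
    have h2 : Q *ᵥ (v ∘ Sum.inr) = 0 := by
      funext i; have := congrFun hv' (Sum.inr i); simpa using this
    have hw : (v ∘ Sum.inr) = 0 := hQ _ h2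
    have h1 : P *ᵥ (v ∘ Sum.inl) = 0 := by
      funext i; have := congrFun hv' (Sum.inl i); simpa [hw] using this
    have hu : (v ∘ Sum.inl) = 0 := hP _ h1
    funext c
    rcases c with c | c
    · exact congrFun hu c
    · exact congrFun hw c

def eRow {α β γ δ : Type*} : (((α ⊕ β) ⊕ γ) ⊕ δ) ≃ (((α ⊕ γ) ⊕ δ) ⊕ β) where
  toFun := fun i => match i with
    | Sum.inl (Sum.inl (Sum.inl a)) => Sum.inl (Sum.inl (Sum.inl a))
    | Sum.inl (Sum.inl (Sum.inr a)) => Sum.inr a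
    | Sum.inl (Sum.inr a) => Sum.inl (Sum.inl (Sum.inr a))
    | Sum.inr a => Sum.inl (Sum.inr a)
  invFun := fun i => match i with
    | Sum.inl (Sum.inl (Sum.inl a)) => Sum.inl (Sum.inl (Sum.inl a))
    | Sum.inl (Sum.inl (Sum.inr a)) => Sum.inl (Sum.inr a)
    | Sum.inl (Sum.inr a) => Sum.inr a
    | Sum.inr a => Sum.inl (Sum.inl (Sum.inr a))
  left_inv := by rintro (((a | a) | a) | a) <;> rfl
  right_inv := by rintro (((a | a) | a) | a) <;> rfl

def eCol {μ α β γ : Type*} : (μ × ((α ⊕ β) ⊕ γ)) ≃ ((μ × (α ⊕ γ)) ⊕ (μ × β)) where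
  toFun := fun p => match p with
    | (j, Sum.inl (Sum.inl a)) => Sum.inl (j, Sum.inl a)
    | (j, Sum.inl (Sum.inr a)) => Sum.inr (j, a)
    | (j, Sum.inr a) => Sum.inl (j, Sum.inr a)
  invFun := fun q => match q with
    | Sum.inl (j, Sum.inl a) => (j, Sum.inl (Sum.inl a))
    | Sum.inl (j, Sum.inr a) => (j, Sum.inr a)
    | Sum.inr (j, a) => (j, Sum.inl (Sum.inr a))
  left_inv := by rintro ⟨j, (a | a) | a⟩ <;> rfl
  right_inv := by rintro ((⟨j, a | a⟩) | ⟨j, a⟩) <;> rfl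


/-- If the horizontal concatenation `[A₂⁽¹⁾ ⋯ A₂⁽ᵐ⁾]` is of full column
rank, then the horizontal concatenation of the block matrices with top parts
`diag{A₁⁽ʲ⁾, A₂⁽ʲ⁾, A₃⁽ʲ⁾}` and bottom row blocks `[B₁⁽ʲ⁾ B₂⁽ʲ⁾ B₃⁽ʲ⁾]` is of full
column rank iff the horizontal concatenation of the block matrices with top parts
`diag{A₁⁽ʲ⁾, A₃⁽ʲ⁾}` and bottom row blocks `[B₁⁽ʲ⁾ B₃⁽ʲ⁾]` is. -/
theorem stmt2 {F : Type*} [Field F] {m : ℕ} (hm : 0 < m)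
    {r₁ r₂ r₃ rB c₁ c₂ c₃ : ℕ}
    (A₁ : Fin m → Matrix (Fin r₁) (Fin c₁) F)
    (A₂ : Fin m → Matrix (Fin r₂) (Fin c₂) F)
    (A₃ : Fin m → Matrix (Fin r₃) (Fin c₃) F)
    (B₁ : Fin m → Matrix (Fin rB) (Fin c₁) F)
    (B₂ : Fin m → Matrix (Fin rB) (Fin c₂) F)
    (B₃ : Fin m → Matrix (Fin rB) (Fin c₃) F)
    (hA₂ : Function.Injective (hconcat A₂).mulVecLin) :
    Function.Injective (hconcat (fun j => Matrix.fromRows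
        (Matrix.fromBlocks (Matrix.fromBlocks (A₁ j) 0 0 (A₂ j)) 0 0 (A₃ j))
        (Matrix.fromCols (Matrix.fromCols (B₁ j) (B₂ j)) (B₃ j)))).mulVecLin ↔
      Function.Injective (hconcat (fun j => Matrix.fromRows
        (Matrix.fromBlocks (A₁ j) 0 0 (A₃ j))
        (Matrix.fromCols (B₁ j) (B₃ j)))).mulVecLin := by
  set N := hconcat (fun j => Matrix.fromRows
      (Matrix.fromBlocks (A₁ j) 0 0 (A₃ j))
      (Matrix.fromCols (B₁ j) (B₃ j))) with hN
  set X : Matrix ((Fin r₁ ⊕ Fin r₃) ⊕ Fin rB) (Fin m × Fin c₂) F :=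
    Matrix.of fun i p => Sum.elim (fun _ => (0 : F)) (fun ib => B₂ p.1 ib p.2) i with hX
  have key : hconcat (fun j => Matrix.fromRows
      (Matrix.fromBlocks (Matrix.fromBlocks (A₁ j) 0 0 (A₂ j)) 0 0 (A₃ j))
      (Matrix.fromCols (Matrix.fromCols (B₁ j) (B₂ j)) (B₃ j)))
      = (fromBlocks N X 0 (hconcat A₂)).submatrix (eRow : _ ≃ _) (eCol : _ ≃ _) := by
    funext i p
    rcases p with ⟨j, (c | c) | c⟩ <;>
      rcases i with (((i | i) | i) | i) <;>
      simp [hconcat, eRow, eCol, hN, hX, Matrix.submatrix]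
  rw [key, inj_submatrix, inj_fromBlocks _ _ _ hA₂]
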